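/- In the SED game, suppose B_e ≥ t_w^all for all w ∈ W and π_w ≤ B_a for all w ∈ W, and suppose the defender feasible set X = {x ∈ [0,1]^W : ∑_w c_w t_w x_w ≤ B_d} is nonempty. Then inf_{x ∈ X} FracVal(x) ≤ 3 · inf_{x ∈ X} IntVal(x). (This is Theorem 4: by LP strong duality, OPT of the relaxed minimization problem P̂₁ equals min_{x∈X} FracVal(x), and this value is at most three times OPT(P₁) = min_{x∈X} IntVal(x).) -/
import Mathlib

open Finset


/-- Feasibility of an (integral) attacker strategy `(y, e)` in the SED game:
`y ∈ {0,1}^W`, `e ≥ 0`, effort budget `Bₑ`, attack budget `Bₐ`, and `e_w ≤ t_w^all · y_w`. -/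
def AttFeas {W : Type*} [Fintype W] (tall pii : W → ℝ) (Ba Be : ℝ) (y e : W → ℝ) : Prop :=
  (∀ w, y w = 0 ∨ y w = 1) ∧ (∀ w, 0 ≤ e w) ∧
    (∑ w, e w ≤ Be) ∧ (∑ w, pii w * y w ≤ Ba) ∧ ∀ w, e w ≤ tall w * y w

/-- Feasibility for the fractional relaxation: `y ∈ [0,1]^W`. -/
def FracFeas {W : Type*} [Fintype W] (tall pii : W → ℝ) (Ba Be : ℝ) (y e : W → ℝ) : Prop :=
  (∀ w, y w ∈ Set.Icc (0:ℝ) 1) ∧ (∀ w, 0 ≤ e w) ∧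
    (∑ w, e w ≤ Be) ∧ (∑ w, pii w * y w ≤ Ba) ∧ ∀ w, e w ≤ tall w * y w

/-- Payoff `f(x,e) = ∑_w κ_w (1 - x_w) e_w`, where `κ_w = t_w / t_w^all`. -/
noncomputable def payoff {W : Type*} [Fintype W] (t tall x e : W → ℝ) : ℝ :=
  ∑ w, (t w / tall w) * (1 - x w) * e w

/-- `IntVal x`: the attacker's optimal value against defender strategy `x`. -/
noncomputable def IntVal {W : Type*} [Fintype W] (t tall pii : W → ℝ) (Ba Be : ℝ)
    (x : W → ℝ) : ℝ :=
  sSup {v | ∃ y e, AttFeas tall pii Ba Be y e ∧ v = payoff t tall x e}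

/-- `FracVal x`: the attacker's optimal value in the fractional relaxation. -/
noncomputable def FracVal {W : Type*} [Fintype W] (t tall pii : W → ℝ) (Ba Be : ℝ)
    (x : W → ℝ) : ℝ :=
  sSup {v | ∃ y e, FracFeas tall pii Ba Be y e ∧ v = payoff t tall x e}

/-- Feasible defender strategies: `x ∈ [0,1]^W` with `∑_w c_w t_w x_w ≤ B_d`. -/
def DefFeas {W : Type*} [Fintype W] (t c : W → ℝ) (Bd : ℝ) (x : W → ℝ) : Prop :=
  (∀ w, x w ∈ Set.Icc (0:ℝ) 1) ∧ ∑ w, c w * t w * x w ≤ Bd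



private lemma sum_three {W : Type*} [Fintype W] [DecidableEq W] (c : W → ℝ) {w1 w2 w3 : W}
    (h12 : w1 ≠ w2) (h13 : w1 ≠ w3) (h23 : w2 ≠ w3) (d1 d2 d3 : ℝ) :
    ∑ w, c w * (if w = w1 then d1 else if w = w2 then d2 else if w = w3 then d3 else 0)
      = c w1 * d1 + c w2 * d2 + c w3 * d3 := by
  rw [← Finset.sum_subset (Finset.subset_univ ({w1, w2, w3} : Finset W))
    (fun w _ hw => by
      simp only [Finset.mem_insert, Finset.mem_singleton] at hw
      push_neg at hw
      rw [if_neg hw.1, if_neg hw.2.1, if_neg hw.2.2, mul_zero])]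
  have e1 : (if w1 = w1 then d1 else if w1 = w2 then d2 else if w1 = w3 then d3 else 0) = d1 :=
    if_pos rfl
  have e2 : (if w2 = w1 then d1 else if w2 = w2 then d2 else if w2 = w3 then d3 else 0) = d2 := by
    rw [if_neg (Ne.symm h12), if_pos rfl]
  have e3 : (if w3 = w1 then d1 else if w3 = w2 then d2 else if w3 = w3 then d3 else 0) = d3 := by
    rw [if_neg (Ne.symm h13), if_neg (Ne.symm h23), if_pos rfl]
  rw [Finset.sum_insert (by simp [h12, h13]), Finset.sum_insert (by simp [h23]),
    Finset.sum_singleton, e1, e2, e3]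
  ring

set_option maxHeartbeats 1000000 in
private lemma exists_good_vertex {W : Type*} [Fintype W] (a q tall : W → ℝ) (Be Ba : ℝ)
    (htall : ∀ w, 0 < tall w) (e0 : W → ℝ)
    (h00 : ∀ w, e0 w ∈ Set.Icc (0:ℝ) (tall w)) (h01 : ∑ w, e0 w ≤ Be)
    (h02 : ∑ w, q w * e0 w ≤ Ba) :
    ∃ e : W → ℝ, (∀ w, e w ∈ Set.Icc (0:ℝ) (tall w)) ∧ (∑ w, e w ≤ Be) ∧
      (∑ w, q w * e w ≤ Ba) ∧ (∑ w, a w * e0 w ≤ ∑ w, a w * e w) ∧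
      (Finset.univ.filter (fun w => e w ≠ 0 ∧ e w ≠ tall w)).card ≤ 2 := by
  classical
  set P : Set (W → ℝ) :=
    {e | (∀ w, e w ∈ Set.Icc (0:ℝ) (tall w)) ∧ (∑ w, e w ≤ Be) ∧ (∑ w, q w * e w ≤ Ba)} with hPdef
  have hsumc : Continuous fun e : W → ℝ => ∑ w, e w :=
    continuous_finset_sum _ fun w _ => continuous_apply w
  have hsumq : Continuous fun e : W → ℝ => ∑ w, q w * e w :=
    continuous_finset_sum _ fun w _ => continuous_const.mul (continuous_apply w)
  have hsuma : Continuous fun e : W → ℝ => ∑ w, a w * e w :=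
    continuous_finset_sum _ fun w _ => continuous_const.mul (continuous_apply w)
  have hsumsq : Continuous fun e : W → ℝ => ∑ w, e w * e w :=
    continuous_finset_sum _ fun w _ => (continuous_apply w).mul (continuous_apply w)
  have hbox : IsCompact {e : W → ℝ | ∀ w, e w ∈ Set.Icc (0:ℝ) (tall w)} := by
    have hh : {e : W → ℝ | ∀ w, e w ∈ Set.Icc (0:ℝ) (tall w)}
        = Set.pi Set.univ fun w => Set.Icc (0:ℝ) (tall w) := by
      ext e; simp [Set.mem_pi, Pi.le_def, forall_and]
    rw [hh]
    exact isCompact_univ_pi fun w => isCompact_Icc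
  have hclosed : IsClosed P := by
    have h1 : IsClosed {e : W → ℝ | ∀ w, e w ∈ Set.Icc (0:ℝ) (tall w)} := by
      have hh : {e : W → ℝ | ∀ w, e w ∈ Set.Icc (0:ℝ) (tall w)}
          = ⋂ w, (fun e : W → ℝ => e w) ⁻¹' Set.Icc (0:ℝ) (tall w) := by
        ext e; simp
      rw [hh]
      exact isClosed_iInter fun w => isClosed_Icc.preimage (continuous_apply w)
    exact h1.inter ((isClosed_le hsumc continuous_const).inter
      (isClosed_le hsumq continuous_const))
  have hPcomp : IsCompact P := hbox.of_isClosed_subset hclosed fun e he => he.1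
  have hPne : P.Nonempty := ⟨e0, h00, h01, h02⟩
  obtain ⟨e1, he1P, he1max⟩ := hPcomp.exists_isMaxOn hPne hsuma.continuousOn
  set K : Set (W → ℝ) := P ∩ {e | ∑ w, a w * e w = ∑ w, a w * e1 w} with hKdef
  have hKcomp : IsCompact K := hPcomp.inter_right (isClosed_eq hsuma continuous_const)
  have hKne : K.Nonempty := ⟨e1, he1P, rfl⟩
  obtain ⟨e2, he2K, he2max⟩ := hKcomp.exists_isMaxOn hKne hsumsq.continuousOn
  obtain ⟨he2P, he2L⟩ := he2K
  refine ⟨e2, he2P.1, he2P.2.1, he2P.2.2, by rw [he2L]; exact he1max ⟨h00, h01, h02⟩, ?_⟩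
  by_contra hcard
  push_neg at hcard
  set F := Finset.univ.filter (fun w => e2 w ≠ 0 ∧ e2 w ≠ tall w) with hFdef
  obtain ⟨w1, hw1⟩ := Finset.card_pos.mp (by omega : 0 < F.card)
  have hc1 : 2 ≤ (F.erase w1).card := by rw [Finset.card_erase_of_mem hw1]; omega
  obtain ⟨w2, hw2⟩ := Finset.card_pos.mp (by omega : 0 < (F.erase w1).card)
  have hc2 : 1 ≤ ((F.erase w1).erase w2).card := by rw [Finset.card_erase_of_mem hw2]; omega
  obtain ⟨w3, hw3⟩ := Finset.card_pos.mp (by omega : 0 < ((F.erase w1).erase w2).card)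
  have h21 : w2 ≠ w1 := (Finset.mem_erase.mp hw2).1
  have hw2F : w2 ∈ F := (Finset.mem_erase.mp hw2).2
  have h32 : w3 ≠ w2 := (Finset.mem_erase.mp hw3).1
  have hw3e : w3 ∈ F.erase w1 := (Finset.mem_erase.mp hw3).2
  have h31 : w3 ≠ w1 := (Finset.mem_erase.mp hw3e).1
  have hw3F : w3 ∈ F := (Finset.mem_erase.mp hw3e).2
  have hint : ∀ w ∈ F, 0 < e2 w ∧ e2 w < tall w := by
    intro w hw
    rw [hFdef, Finset.mem_filter] at hw
    obtain ⟨hl, hr⟩ := he2P.1 w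
    exact ⟨lt_of_le_of_ne hl (Ne.symm hw.2.1), lt_of_le_of_ne hr hw.2.2⟩
  obtain ⟨hi1, hi1'⟩ := hint w1 hw1
  obtain ⟨hi2, hi2'⟩ := hint w2 hw2F
  obtain ⟨hi3, hi3'⟩ := hint w3 hw3F
  obtain ⟨d1, d2, d3, hd0, hdq, hdC⟩ :
      ∃ d1 d2 d3 : ℝ, d1 + d2 + d3 = 0 ∧ q w1 * d1 + q w2 * d2 + q w3 * d3 = 0 ∧
        0 < d1 * d1 + d2 * d2 + d3 * d3 := by
    by_cases hq12 : q w1 = q w2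
    · exact ⟨1, -1, 0, by ring, by rw [hq12]; ring, by norm_num⟩
    · refine ⟨q w2 - q w3, q w3 - q w1, q w1 - q w2, by ring, by ring, ?_⟩
      have h := mul_self_pos.mpr (sub_ne_zero.mpr hq12)
      nlinarith [mul_self_nonneg (q w2 - q w3), mul_self_nonneg (q w3 - q w1)]
  have h12 : w1 ≠ w2 := Ne.symm h21
  have h13 : w1 ≠ w3 := Ne.symm h31
  have h23 : w2 ≠ w3 := Ne.symm h32
  set d : W → ℝ :=
    fun w => if w = w1 then d1 else if w = w2 then d2 else if w = w3 then d3 else 0 with hddef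
  have hsum3 : ∀ c : W → ℝ, ∑ w, c w * d w = c w1 * d1 + c w2 * d2 + c w3 * d3 :=
    fun c => sum_three c h12 h13 h23 d1 d2 d3
  have hdw1 : d w1 = d1 := by simp [hddef]
  have hdw2 : d w2 = d2 := by simp [hddef, h21]
  have hdw3 : d w3 = d3 := by simp [hddef, h31, h32]
  have hdsum : ∑ w, d w = 0 := by
    have h := hsum3 fun _ => (1:ℝ)
    simp only [one_mul] at h
    rw [h]; linarith
  have hqd : ∑ w, q w * d w = 0 := by rw [hsum3 q]; exact hdq
  have hexp : ∀ (c : W → ℝ) (s : ℝ),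
      ∑ w, c w * (e2 w + s * d w) = ∑ w, c w * e2 w + s * ∑ w, c w * d w := by
    intro c s
    rw [Finset.mul_sum, ← Finset.sum_add_distrib]
    exact Finset.sum_congr rfl fun w _ => by ring
  have hexp1 : ∀ s : ℝ, ∑ w, (e2 w + s * d w) = ∑ w, e2 w + s * ∑ w, d w := by
    intro s
    rw [Finset.mul_sum, ← Finset.sum_add_distrib]
  set m : ℝ := min (min (e2 w1) (tall w1 - e2 w1))
      (min (min (e2 w2) (tall w2 - e2 w2)) (min (e2 w3) (tall w3 - e2 w3))) with hmdef
  have hm0 : 0 < m := by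
    refine lt_min (lt_min ?_ ?_) (lt_min (lt_min ?_ ?_) (lt_min ?_ ?_)) <;> linarith
  have hmb1 : m ≤ e2 w1 := le_trans (min_le_left _ _) (min_le_left _ _)
  have hmb1' : m ≤ tall w1 - e2 w1 := le_trans (min_le_left _ _) (min_le_right _ _)
  have hmb2 : m ≤ e2 w2 :=
    le_trans (min_le_right _ _) (le_trans (min_le_left _ _) (min_le_left _ _))
  have hmb2' : m ≤ tall w2 - e2 w2 :=
    le_trans (min_le_right _ _) (le_trans (min_le_left _ _) (min_le_right _ _))
  have hmb3 : m ≤ e2 w3 :=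
    le_trans (min_le_right _ _) (le_trans (min_le_right _ _) (min_le_left _ _))
  have hmb3' : m ≤ tall w3 - e2 w3 :=
    le_trans (min_le_right _ _) (le_trans (min_le_right _ _) (min_le_right _ _))
  set D : ℝ := |d1| + |d2| + |d3| + 1 with hDdef
  have hD0 : 0 < D := by positivity
  set ε : ℝ := m / D with hεdef
  have hε0 : 0 < ε := div_pos hm0 hD0
  have hεD : ε * D = m := div_mul_cancel₀ m (ne_of_gt hD0)
  have hfeas : ∀ s : ℝ, |s| ≤ ε → (fun w => e2 w + s * d w) ∈ P := by
    intro s hs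
    have habs : ∀ dd : ℝ, |dd| ≤ D → |s * dd| ≤ m := by
      intro dd hdd
      rw [abs_mul]
      calc |s| * |dd| ≤ ε * D := mul_le_mul hs hdd (abs_nonneg _) hε0.le
        _ = m := hεD
    have hb1 := habs d1 (by
      have := abs_nonneg d2; have := abs_nonneg d3; rw [hDdef]; linarith)
    have hb2 := habs d2 (by
      have := abs_nonneg d1; have := abs_nonneg d3; rw [hDdef]; linarith)
    have hb3 := habs d3 (by
      have := abs_nonneg d1; have := abs_nonneg d2; rw [hDdef]; linarith)
    refine ⟨?_, ?_, ?_⟩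
    · intro w
      show e2 w + s * d w ∈ Set.Icc (0:ℝ) (tall w)
      by_cases hww1 : w = w1
      · subst hww1
        rw [hdw1]
        obtain ⟨hA, hB⟩ := abs_le.mp hb1
        exact Set.mem_Icc.mpr ⟨by linarith, by linarith⟩
      by_cases hww2 : w = w2
      · subst hww2
        rw [hdw2]
        obtain ⟨hA, hB⟩ := abs_le.mp hb2
        exact Set.mem_Icc.mpr ⟨by linarith, by linarith⟩
      by_cases hww3 : w = w3
      · subst hww3
        rw [hdw3]
        obtain ⟨hA, hB⟩ := abs_le.mp hb3
        exact Set.mem_Icc.mpr ⟨by linarith, by linarith⟩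
      · have hdw : d w = 0 := by simp [hddef, hww1, hww2, hww3]
        rw [hdw, mul_zero, add_zero]
        exact he2P.1 w
    · rw [hexp1 s, hdsum, mul_zero, add_zero]
      exact he2P.2.1
    · rw [hexp q s, hqd, mul_zero, add_zero]
      exact he2P.2.2
  clear_value d m D ε
  have he2L' : ∑ w, a w * e2 w = ∑ w, a w * e1 w := he2L
  have hA : ∑ w, a w * d w = 0 := by
    have hp : ∑ w, a w * (e2 w + ε * d w) ≤ ∑ w, a w * e1 w :=
      he1max (hfeas ε (by rw [abs_of_pos hε0]))
    have hn : ∑ w, a w * (e2 w + (-ε) * d w) ≤ ∑ w, a w * e1 w :=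
      he1max (hfeas (-ε) (by rw [abs_neg, abs_of_pos hε0]))
    rw [hexp a ε, he2L'] at hp
    rw [hexp a (-ε), he2L'] at hn
    have hl1 : ∑ w, a w * d w ≤ 0 := by nlinarith
    have hl2 : 0 ≤ ∑ w, a w * d w := by nlinarith
    linarith
  have hC : 0 < ∑ w, d w * d w := by
    rw [hsum3 d, hdw1, hdw2, hdw3]; exact hdC
  set s0 : ℝ := if 0 ≤ ∑ w, e2 w * d w then ε else -ε with hs0def
  have hs0abs : |s0| ≤ ε := by
    rw [hs0def]; split
    · rw [abs_of_pos hε0]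
    · rw [abs_neg, abs_of_pos hε0]
  have hs0B : 0 ≤ s0 * ∑ w, e2 w * d w := by
    rw [hs0def]; split
    · exact mul_nonneg hε0.le (by assumption)
    · rename_i hneg
      push_neg at hneg
      nlinarith
  have hs0sq : 0 < s0 * s0 := by
    rw [hs0def]; split <;> nlinarith
  clear_value s0
  have he'P := hfeas s0 hs0abs
  have he'K : (fun w => e2 w + s0 * d w) ∈ K :=
    ⟨he'P, show ∑ w, a w * (e2 w + s0 * d w) = ∑ w, a w * e1 w by
      rw [hexp a s0, hA, mul_zero, add_zero]; exact he2L'⟩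
  have hQ : ∑ w, (e2 w + s0 * d w) * (e2 w + s0 * d w) ≤ ∑ w, e2 w * e2 w := he2max he'K
  have hQexp : ∑ w, (e2 w + s0 * d w) * (e2 w + s0 * d w)
      = ∑ w, e2 w * e2 w + (2 * s0) * ∑ w, e2 w * d w + (s0 * s0) * ∑ w, d w * d w := by
    rw [Finset.mul_sum, Finset.mul_sum, ← Finset.sum_add_distrib, ← Finset.sum_add_distrib]
    exact Finset.sum_congr rfl fun w _ => by ring
  rw [hQexp] at hQ
  nlinarith [mul_pos hs0sq hC]

set_option maxHeartbeats 1000000 in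
/-- Theorem 4: if `B_e ≥ t_w^all` and `π_w ≤ B_a` for all `w`,
and the defender feasible set `X` is nonempty, then
`inf_{x ∈ X} FracVal(x) ≤ 3 · inf_{x ∈ X} IntVal(x)`. -/
theorem relaxed_opt_le_three_opt
    {W : Type*} [Fintype W] (t tall c pii : W → ℝ) (Bd Ba Be : ℝ)
    (ht : ∀ w, 0 < t w) (htall : ∀ w, t w ≤ tall w)
    (hc : ∀ w, 0 < c w) (hpii : ∀ w, 0 < pii w)
    (hBd : 0 ≤ Bd) (hBa : 0 ≤ Ba) (hBe : 0 ≤ Be)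
    (hBe' : ∀ w, tall w ≤ Be) (haff : ∀ w, pii w ≤ Ba)
    (hX : ∃ x : W → ℝ, DefFeas t c Bd x) :
    sInf {v : ℝ | ∃ x : W → ℝ, DefFeas t c Bd x ∧ v = FracVal t tall pii Ba Be x}
      ≤ 3 * sInf {v : ℝ | ∃ x : W → ℝ, DefFeas t c Bd x ∧ v = IntVal t tall pii Ba Be x} := by
  classical
  have htall0 : ∀ w, 0 < tall w := fun w => lt_of_lt_of_le (ht w) (htall w)
  -- pointwise bound: FracVal x ≤ 3 * IntVal x for feasible x
  have key : ∀ x : W → ℝ, DefFeas t c Bd x →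
      FracVal t tall pii Ba Be x ≤ 3 * IntVal t tall pii Ba Be x := by
    intro x hx
    set a : W → ℝ := fun w => t w / tall w * (1 - x w) with hadef
    have hpay : ∀ e : W → ℝ, payoff t tall x e = ∑ w, a w * e w := fun e => rfl
    have ha0 : ∀ w, 0 ≤ a w := fun w =>
      mul_nonneg (div_nonneg (ht w).le (htall0 w).le) (by linarith [(hx.1 w).2])
    have ha1 : ∀ w, a w ≤ 1 := by
      intro w
      show t w / tall w * (1 - x w) ≤ 1
      have h1 : t w / tall w ≤ 1 := (div_le_one (htall0 w)).mpr (htall w)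
      have h2 : 1 - x w ≤ 1 := by linarith [(hx.1 w).1]
      have h3 : 0 ≤ 1 - x w := by linarith [(hx.1 w).2]
      have h4 : 0 ≤ t w / tall w := div_nonneg (ht w).le (htall0 w).le
      nlinarith
    have hIntBdd : BddAbove {v | ∃ y e, AttFeas tall pii Ba Be y e ∧ v = payoff t tall x e} := by
      refine ⟨∑ w, tall w, ?_⟩
      rintro v ⟨y, e, hf, rfl⟩
      rw [hpay]
      apply Finset.sum_le_sum
      intro w _
      have hy1 : y w ≤ 1 := by rcases hf.1 w with h | h <;> simp [h]
      have he0 := hf.2.1 w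
      have hec := hf.2.2.2.2 w
      have h5 : a w * e w ≤ e w := mul_le_of_le_one_left he0 (ha1 w)
      have h6 : tall w * y w ≤ tall w := by nlinarith [(htall0 w).le]
      linarith
    have hFracBdd : BddAbove {v | ∃ y e, FracFeas tall pii Ba Be y e ∧ v = payoff t tall x e} := by
      refine ⟨∑ w, tall w, ?_⟩
      rintro v ⟨y, e, hf, rfl⟩
      rw [hpay]
      apply Finset.sum_le_sum
      intro w _
      have hy1 : y w ≤ 1 := (hf.1 w).2
      have he0 := hf.2.1 w
      have hec := hf.2.2.2.2 w
      have h5 : a w * e w ≤ e w := mul_le_of_le_one_left he0 (ha1 w)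
      have h6 : tall w * y w ≤ tall w := by nlinarith [(htall0 w).le]
      linarith
    have hzeroInt : (0:ℝ) ∈ {v | ∃ y e, AttFeas tall pii Ba Be y e ∧ v = payoff t tall x e} := by
      refine ⟨0, 0, ⟨fun w => Or.inl rfl, fun w => le_refl 0, by simpa using hBe,
        by simpa using hBa, fun w => by simp⟩, ?_⟩
      rw [hpay]; simp
    have hInt0 : 0 ≤ IntVal t tall pii Ba Be x := le_csSup hIntBdd hzeroInt
    have hsingle : ∀ w0, a w0 * tall w0 ≤ IntVal t tall pii Ba Be x := by
      intro w0
      apply le_csSup hIntBdd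
      refine ⟨fun w => if w = w0 then 1 else 0, fun w => if w = w0 then tall w0 else 0,
        ⟨?_, ?_, ?_, ?_, ?_⟩, ?_⟩
      · intro w; by_cases h : w = w0 <;> simp [h]
      · intro w; by_cases h : w = w0 <;> simp [h, (htall0 w0).le]
      · simp only [Finset.sum_ite_eq', Finset.mem_univ, if_true]
        exact hBe' w0
      · simp only [mul_ite, mul_one, mul_zero, Finset.sum_ite_eq', Finset.mem_univ, if_true]
        exact haff w0
      · intro w; by_cases h : w = w0 <;> simp [h]
      · rw [hpay]
        simp [mul_ite, mul_zero, Finset.sum_ite_eq']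
    have hsetS : ∀ S : Finset W, (∑ w ∈ S, tall w ≤ Be) → (∑ w ∈ S, pii w ≤ Ba) →
        ∑ w ∈ S, a w * tall w ≤ IntVal t tall pii Ba Be x := by
      intro S hS1 hS2
      apply le_csSup hIntBdd
      refine ⟨fun w => if w ∈ S then 1 else 0, fun w => if w ∈ S then tall w else 0,
        ⟨?_, ?_, ?_, ?_, ?_⟩, ?_⟩
      · intro w; by_cases h : w ∈ S <;> simp [h]
      · intro w; by_cases h : w ∈ S <;> simp [h, (htall0 w).le]
      · rw [Finset.sum_ite_mem, Finset.univ_inter]; exact hS1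
      · simp only [mul_ite, mul_one, mul_zero]
        rw [Finset.sum_ite_mem, Finset.univ_inter]; exact hS2
      · intro w; by_cases h : w ∈ S <;> simp [h]
      · rw [hpay]
        simp only [mul_ite, mul_zero]
        rw [Finset.sum_ite_mem, Finset.univ_inter]
    have hFracne : {v | ∃ y e, FracFeas tall pii Ba Be y e ∧ v = payoff t tall x e}.Nonempty := by
      refine ⟨0, 0, 0, ⟨fun w => Set.mem_Icc.mpr ⟨le_refl 0, zero_le_one⟩, fun w => le_refl 0,
        by simpa using hBe, by simpa using hBa, fun w => by simp⟩, ?_⟩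
      rw [hpay]; simp
    show sSup _ ≤ _
    apply csSup_le hFracne
    rintro v ⟨y, e, hf, rfl⟩
    rw [hpay]
    obtain ⟨hfy, hfe0, hfBe, hfBa, hfcap⟩ := hf
    have hIcc : ∀ w, e w ∈ Set.Icc (0:ℝ) (tall w) := by
      intro w
      refine Set.mem_Icc.mpr ⟨hfe0 w, ?_⟩
      have h1 := hfcap w
      have h2 : tall w * y w ≤ tall w := by nlinarith [(htall0 w).le, (hfy w).2]
      linarith
    have hqBa : ∑ w, (pii w / tall w) * e w ≤ Ba := by
      refine le_trans (Finset.sum_le_sum ?_) hfBa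
      intro w _
      have h1 := hfcap w
      have h0 : 0 ≤ pii w / tall w := div_nonneg (hpii w).le (htall0 w).le
      calc pii w / tall w * e w ≤ pii w / tall w * (tall w * y w) :=
            mul_le_mul_of_nonneg_left h1 h0
        _ = pii w * y w := by rw [← mul_assoc, div_mul_cancel₀ _ (ne_of_gt (htall0 w))]
    obtain ⟨e', he'Icc, he'Be, he'Ba, he'obj, he'card⟩ :=
      exists_good_vertex a (fun w => pii w / tall w) tall Be Ba htall0 e hIcc hfBe hqBa
    set S : Finset W := Finset.univ.filter (fun w => e' w = tall w) with hSdef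
    set F : Finset W := Finset.univ.filter (fun w => e' w ≠ 0 ∧ e' w ≠ tall w) with hFdef
    have hsplit : ∑ w, a w * e' w = ∑ w ∈ S, a w * e' w +
        ∑ w ∈ Finset.univ.filter (fun w => ¬ e' w = tall w), a w * e' w :=
      (Finset.sum_filter_add_sum_filter_not _ _ _).symm
    have hSsum : ∑ w ∈ S, a w * e' w = ∑ w ∈ S, a w * tall w :=
      Finset.sum_congr rfl fun w hw => by rw [(Finset.mem_filter.mp hw).2]
    have hSle : ∑ w ∈ S, a w * tall w ≤ IntVal t tall pii Ba Be x := by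
      apply hsetS
      · calc ∑ w ∈ S, tall w = ∑ w ∈ S, e' w :=
              Finset.sum_congr rfl fun w hw => ((Finset.mem_filter.mp hw).2).symm
          _ ≤ ∑ w, e' w := Finset.sum_le_sum_of_subset_of_nonneg (Finset.subset_univ S)
              (fun w _ _ => (he'Icc w).1)
          _ ≤ Be := he'Be
      · calc ∑ w ∈ S, pii w = ∑ w ∈ S, (pii w / tall w) * e' w := by
              refine Finset.sum_congr rfl fun w hw => ?_
              rw [(Finset.mem_filter.mp hw).2, div_mul_cancel₀ _ (ne_of_gt (htall0 w))]
          _ ≤ ∑ w, (pii w / tall w) * e' w :=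
              Finset.sum_le_sum_of_subset_of_nonneg (Finset.subset_univ S)
                (fun w _ _ => mul_nonneg (div_nonneg (hpii w).le (htall0 w).le) (he'Icc w).1)
          _ ≤ Ba := he'Ba
    have hrest : ∑ w ∈ Finset.univ.filter (fun w => ¬ e' w = tall w), a w * e' w
        = ∑ w ∈ F, a w * e' w := by
      refine (Finset.sum_subset ?_ ?_).symm
      · intro w hw
        rw [hFdef, Finset.mem_filter] at hw
        exact Finset.mem_filter.mpr ⟨Finset.mem_univ w, hw.2.2⟩
      · intro w hw hwF
        rw [Finset.mem_filter] at hw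
        rw [hFdef, Finset.mem_filter] at hwF
        push_neg at hwF
        have h0 : e' w = 0 := by
          by_contra hne
          exact hw.2 (hwF (Finset.mem_univ w) hne)
        rw [h0, mul_zero]
    have hFle : ∑ w ∈ F, a w * e' w ≤ 2 * IntVal t tall pii Ba Be x := by
      have h1 : ∑ w ∈ F, a w * e' w ≤ F.card • IntVal t tall pii Ba Be x :=
        Finset.sum_le_card_nsmul F _ _ (fun w _ =>
          le_trans (mul_le_mul_of_nonneg_left (he'Icc w).2 (ha0 w)) (hsingle w))
      have h2 : (F.card : ℝ) ≤ 2 := by exact_mod_cast he'card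
      calc ∑ w ∈ F, a w * e' w ≤ F.card • IntVal t tall pii Ba Be x := h1
        _ = (F.card : ℝ) * IntVal t tall pii Ba Be x := nsmul_eq_mul _ _
        _ ≤ 2 * IntVal t tall pii Ba Be x := mul_le_mul_of_nonneg_right h2 hInt0
    have hfin : ∑ w, a w * e' w ≤ 3 * IntVal t tall pii Ba Be x := by
      rw [hsplit, hSsum, hrest]
      linarith
    linarith [he'obj]
  -- conclude for the infima
  obtain ⟨x0, hx0⟩ := hX
  set Ls : Set ℝ := {v | ∃ x : W → ℝ, DefFeas t c Bd x ∧ v = FracVal t tall pii Ba Be x} with hLs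
  set Rs : Set ℝ := {v | ∃ x : W → ℝ, DefFeas t c Bd x ∧ v = IntVal t tall pii Ba Be x} with hRs
  have hLne : Ls.Nonempty := ⟨FracVal t tall pii Ba Be x0, x0, hx0, rfl⟩
  have hRne : Rs.Nonempty := ⟨IntVal t tall pii Ba Be x0, x0, hx0, rfl⟩
  have hLbdd : BddBelow Ls := by
    refine ⟨0, ?_⟩
    rintro v ⟨x, hx, rfl⟩
    have hFracBdd : BddAbove {v | ∃ y e, FracFeas tall pii Ba Be y e ∧ v = payoff t tall x e} := by
      refine ⟨∑ w, tall w, ?_⟩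
      rintro v ⟨y, e, hf, rfl⟩
      apply Finset.sum_le_sum
      intro w _
      have hy1 : y w ≤ 1 := (hf.1 w).2
      have he0 := hf.2.1 w
      have hec := hf.2.2.2.2 w
      have ha0 : 0 ≤ t w / tall w * (1 - x w) :=
        mul_nonneg (div_nonneg (ht w).le (htall0 w).le) (by linarith [(hx.1 w).2])
      have ha1 : t w / tall w * (1 - x w) ≤ 1 := by
        have h1 : t w / tall w ≤ 1 := (div_le_one (htall0 w)).mpr (htall w)
        have h2 : 1 - x w ≤ 1 := by linarith [(hx.1 w).1]
        have h4 : 0 ≤ t w / tall w := div_nonneg (ht w).le (htall0 w).le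
        nlinarith [(hx.1 w).2]
      have h5 : t w / tall w * (1 - x w) * e w ≤ e w := mul_le_of_le_one_left he0 ha1
      have h6 : tall w * y w ≤ tall w := by nlinarith [(htall0 w).le]
      linarith
    have hzero : (0:ℝ) ∈ {v | ∃ y e, FracFeas tall pii Ba Be y e ∧ v = payoff t tall x e} := by
      refine ⟨0, 0, ⟨fun w => Set.mem_Icc.mpr ⟨le_refl 0, zero_le_one⟩, fun w => le_refl 0,
        by simpa using hBe, by simpa using hBa, fun w => by simp⟩, ?_⟩
      simp [payoff]
    exact le_csSup hFracBdd hzero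
  have hmain : ∀ v ∈ Rs, sInf Ls ≤ 3 * v := by
    rintro v ⟨x, hx, rfl⟩
    calc sInf Ls ≤ FracVal t tall pii Ba Be x := csInf_le hLbdd ⟨x, hx, rfl⟩
      _ ≤ 3 * IntVal t tall pii Ba Be x := key x hx
  have hstep : sInf Ls / 3 ≤ sInf Rs := by
    apply le_csInf hRne
    intro v hv
    linarith [hmain v hv]
  linarith
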